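/- Let p ≥ 5 be a prime, let x ∈ ℤ_p with digit sequence a : ℕ → ℕ (so a i ≤ p − 1 and x = Σ a i · p^i), and let ℓ ∈ ℤ with (ℓ : ℤ_p) ≠ x. For k ≥ 1 set ℓ_k := ℓ − Σ_{i=0}^{k−1} (a i) · p^i ∈ ℤ. Then for every K > 0 there exist k > K and integers s, n with p ∤ s, 0 ≤ n < k, and ℓ_k = s · p^n. -/
import Mathlib


/-- A digit sequence for `x ∈ ℤ_[p]`: a function `a : ℕ → ℕ` with `a i ≤ p - 1`
for all `i`, such that `x = Σ_{i=0}^∞ (a i) · p^i` (the series converging in `ℤ_[p]`). -/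
def IsDigitSequence (p : ℕ) [Fact p.Prime] (a : ℕ → ℕ) (x : ℤ_[p]) : Prop :=
  (∀ i, a i ≤ p - 1) ∧ HasSum (fun i : ℕ => (a i : ℤ_[p]) * (p : ℤ_[p]) ^ i) x

/-- Ultrametric: if `‖a - b‖ < ‖b‖` then `‖a‖ = ‖b‖`. -/
lemma norm_eq_of_sub_lt {p : ℕ} [Fact p.Prime] {a b : ℤ_[p]} (h : ‖a - b‖ < ‖b‖) :
    ‖a‖ = ‖b‖ := by
  have : a = (a - b) + b := by ring
  rw [this]
  rw [IsUltrametricDist.norm_add_eq_max_of_norm_ne_norm (by exact ne_of_lt h)]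
  exact max_eq_right h.le

/-- If `(ℓ : ℤ_p) ≠ x` then for every `K > 0` there is a `k > K` such that the truncation
`ℓ_k = ℓ − Σ_{i=0}^{k−1} a i · p^i` has the form `s · p^n` with `p ∤ s` and `0 ≤ n < k`. -/
theorem truncation_valuation_lt (p : ℕ) [Fact p.Prime] (hp5 : 5 ≤ p)
    (x : ℤ_[p]) (a : ℕ → ℕ) (ha : IsDigitSequence p a x)
    (ℓ : ℤ) (hℓ : (ℓ : ℤ_[p]) ≠ x) :
    ∀ K : ℕ, 0 < K → ∃ k : ℕ, K < k ∧ ∃ s : ℤ, ∃ n : ℕ, ¬ ((p : ℤ) ∣ s) ∧ n < k ∧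
      ℓ - ∑ i ∈ Finset.range k, (a i : ℤ) * (p : ℤ) ^ i = s * (p : ℤ) ^ n := by
  intro K hK
  have hp1 : (1 : ℝ) < p := by exact_mod_cast (Fact.out : p.Prime).one_lt
  have hdne : (ℓ : ℤ_[p]) - x ≠ 0 := sub_ne_zero.mpr hℓ
  have hε : (0 : ℝ) < ‖(ℓ : ℤ_[p]) - x‖ := norm_pos_iff.mpr hdne
  -- find v with (p⁻¹)^v < ε
  obtain ⟨v, hv⟩ : ∃ v : ℕ, ((p : ℝ)⁻¹) ^ v < ‖(ℓ : ℤ_[p]) - x‖ :=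
    exists_pow_lt_of_lt_one hε (inv_lt_one_of_one_lt₀ hp1)
  -- partial sums tend to x
  have htend := ha.2.tendsto_sum_nat
  obtain ⟨N, hN⟩ := (Metric.tendsto_atTop.mp htend) (‖(ℓ : ℤ_[p]) - x‖) hε
  set k := max (max K v) N + 1 with hkdef
  have hkK : K < k := lt_of_le_of_lt (le_max_left _ _ |>.trans (le_max_left _ _)) (Nat.lt_succ_self _)
  have hkv : v < k := lt_of_le_of_lt (le_max_right _ _ |>.trans (le_max_left _ _)) (Nat.lt_succ_self _)
  have hkN : N ≤ k := (le_max_right _ _).trans (Nat.le_succ _)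
  refine ⟨k, hkK, ?_⟩
  set m : ℤ := ℓ - ∑ i ∈ Finset.range k, (a i : ℤ) * (p : ℤ) ^ i with hm
  have hcast : (m : ℤ_[p]) = (ℓ : ℤ_[p]) - ∑ i ∈ Finset.range k, (a i : ℤ_[p]) * (p : ℤ_[p]) ^ i := by
    push_cast [hm]
    ring
  -- norm of m equals ε
  have hsmall : ‖((∑ i ∈ Finset.range k, (a i : ℤ_[p]) * (p : ℤ_[p]) ^ i) - x)‖
      < ‖(ℓ : ℤ_[p]) - x‖ := by
    have := hN k hkN
    rwa [dist_eq_norm] at this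
  have hnormm : ‖(m : ℤ_[p])‖ = ‖(ℓ : ℤ_[p]) - x‖ := by
    apply norm_eq_of_sub_lt
    rw [hcast]
    have : (ℓ : ℤ_[p]) - (∑ i ∈ Finset.range k, (a i : ℤ_[p]) * (p : ℤ_[p]) ^ i)
        - ((ℓ : ℤ_[p]) - x) = -((∑ i ∈ Finset.range k, (a i : ℤ_[p]) * (p : ℤ_[p]) ^ i) - x) := by
      ring
    rw [this, norm_neg]
    exact hsmall
  have hm0 : m ≠ 0 := by
    intro h
    rw [h] at hnormm
    simp at hnormm
    exact hε.ne' (by simpa using hnormm.symm)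
  set n := padicValInt p m with hn
  have hdvd : (p : ℤ) ^ n ∣ m := padicValInt_dvd m
  obtain ⟨s, hs⟩ := hdvd
  have hps : ¬ (p : ℤ) ∣ s := by
    intro ⟨t, ht⟩
    have : (p : ℤ) ^ (n + 1) ∣ m := ⟨t, by rw [hs, ht]; ring⟩
    rcases (padicValInt_dvd_iff (n + 1) m).mp this with h | h
    · exact hm0 h
    · omega
  have hnk : n < k := by
    by_contra hnk
    push_neg at hnk
    have hdvdk : (p : ℤ) ^ k ∣ m := dvd_trans (pow_dvd_pow _ hnk) (padicValInt_dvd m)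
    have := PadicInt.norm_int_le_pow_iff_dvd.mpr hdvdk
    rw [hnormm] at this
    have hlt : ((p : ℝ) ^ k)⁻¹ ≤ ((p : ℝ) ^ v)⁻¹ := by
      apply inv_anti₀ (by positivity)
      exact pow_le_pow_right₀ hp1.le hkv.le
    have : ‖(ℓ : ℤ_[p]) - x‖ ≤ ((p : ℝ) ^ v)⁻¹ := by
      calc ‖(ℓ : ℤ_[p]) - x‖ ≤ (p : ℝ) ^ (-(k : ℤ)) := this
        _ = ((p : ℝ) ^ k)⁻¹ := by rw [zpow_neg, zpow_natCast]
        _ ≤ ((p : ℝ) ^ v)⁻¹ := hlt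
    rw [inv_pow] at hv
    linarith
  exact ⟨s, n, hps, hnk, by rw [hs]; ring⟩
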